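/- Let A be a unital *-algebra, q a nonzero real number, and x₀ = x₀*, x₁, …, xₙ ∈ A satisfying x_i x_j = q x_j x_i for 0 ≤ i < j ≤ n, x_i* x_j = q x_j x_i* for i ≠ j, and x_i x_i* − x_i* x_i = (1 − q^{−2}) s_{i−1} for 1 ≤ i ≤ n, where s₀ := x₀² and s_i := s_{i−1} + x_i* x_i. Then for all 0 ≤ i, j ≤ n: s_i x_j = q² x_j s_i and s_i x_j* = q^{−2} x_j* s_i whenever i < j; s_i x_j = x_j s_i and s_i x_j* = x_j* s_i whenever i ≥ j; and the elements s₀, …, sₙ pairwise commute. In particular sₙ commutes with every generator. -/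

import Mathlib

/-- The partial radii `s₀ = x₀²`, `s_i = s_{i−1} + x_i* x_i` of the quantum
Euclidean sphere `S_q^{2n}`. -/
def partialRadius {A : Type*} [Ring A] [Star A] (x : ℕ → A) : ℕ → A
  | 0 => x 0 ^ 2
  | (i + 1) => partialRadius x i + star (x (i + 1)) * x (i + 1)

/-- Commutation properties of the partial radii of the quantum Euclidean sphere
`S_q^{2n}`: `s_i x_j = q² x_j s_i` and `s_i x_j* = q^{−2} x_j* s_i` for `i < j`,
`s_i` commutes with `x_j, x_j*` for `i ≥ j`, the `s_i` pairwise commute, and in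
particular `s_n` commutes with every generator. -/
theorem partialRadius_commutation
    (A : Type*) [Ring A] [Algebra ℝ A] [StarRing A]
    (q : ℝ) (hq : q ≠ 0) (n : ℕ) (x : ℕ → A)
    (hx0 : star (x 0) = x 0)
    (hcomm : ∀ i j, i < j → j ≤ n → x i * x j = q • (x j * x i))
    (hstar : ∀ i j, i ≤ n → j ≤ n → i ≠ j → star (x i) * x j = q • (x j * star (x i)))
    (hrel : ∀ i, i < n →
      x (i + 1) * star (x (i + 1)) - star (x (i + 1)) * x (i + 1)
        = (1 - q⁻¹ ^ 2) • partialRadius x i) :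
    (∀ i j, i < j → j ≤ n →
      partialRadius x i * x j = q ^ 2 • (x j * partialRadius x i) ∧
      partialRadius x i * star (x j) = q⁻¹ ^ 2 • (star (x j) * partialRadius x i)) ∧
    (∀ i j, j ≤ i → i ≤ n →
      partialRadius x i * x j = x j * partialRadius x i ∧
      partialRadius x i * star (x j) = star (x j) * partialRadius x i) ∧
    (∀ i j, i ≤ n → j ≤ n → Commute (partialRadius x i) (partialRadius x j)) ∧
    (∀ j, j ≤ n → Commute (partialRadius x n) (x j) ∧
      Commute (partialRadius x n) (star (x j))) := by
  -- basic scalar manipulation helpers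
  have flip : ∀ (r : ℝ) (a b : A), r ≠ 0 → a = r • b → b = r⁻¹ • a := by
    intro r a b hr h
    rw [h, smul_smul, inv_mul_cancel₀ hr, one_smul]
  have pair : ∀ (r s : ℝ) (u v b : A), u * b = r • (b * u) → v * b = s • (b * v) →
      u * v * b = (r * s) • (b * (u * v)) := by
    intro r s u v b h1 h2
    calc u * v * b = u * (v * b) := mul_assoc _ _ _
      _ = s • (u * b * v) := by rw [h2, mul_smul_comm, mul_assoc]
      _ = s • ((r • (b * u)) * v) := by rw [h1]
      _ = (r * s) • (b * (u * v)) := by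
          rw [smul_mul_assoc, smul_smul, mul_comm s r, mul_assoc]
  -- the central element d = star (algebraMap ℝ A q)
  set d : A := star (algebraMap ℝ A q) with hdq
  have hdc : ∀ a : A, d * a = a * d := by
    intro a
    calc d * a = star (algebraMap ℝ A q) * star (star a) := by rw [star_star]
      _ = star (star a * algebraMap ℝ A q) := (star_mul _ _).symm
      _ = star (algebraMap ℝ A q * star a) := by rw [Algebra.commutes]
      _ = star (star a) * star (algebraMap ℝ A q) := by rw [star_mul]
      _ = a * d := by rw [star_star]
  have hstar_smul : ∀ a : A, star (q • a) = d * star a := by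
    intro a
    rw [Algebra.smul_def, star_mul, ← hdc]
  have hdinv : star (algebraMap ℝ A q⁻¹) * d = 1 := by
    rw [hdq, ← star_mul, ← map_mul, mul_inv_cancel₀ hq, map_one, star_one]
  -- key : d acts as q on elements of the form x a * star (x b), a ≠ b
  have key : ∀ a b, a ≤ n → b ≤ n → a ≠ b →
      d * (x a * star (x b)) = q • (x a * star (x b)) := by
    intro a b han hbn hab
    have h2 := congrArg star (hstar a b han hbn hab)
    rw [star_mul, star_star, hstar_smul, star_mul, star_star] at h2
    -- h2 : star (x b) * x a = d * (x a * star (x b))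
    rw [← h2]
    exact hstar b a hbn han (Ne.symm hab)
  -- yy : star-star commutation up to the central element d
  have yy : ∀ a b, a < b → b ≤ n →
      star (x b) * star (x a) = d * (star (x a) * star (x b)) := by
    intro a b hab hbn
    have h2 := congrArg star (hcomm a b hab hbn)
    rw [star_mul, hstar_smul, star_mul] at h2
    exact h2
  -- L : commutation of x_k* x_k with x_j* for k < j
  have L : ∀ k j, k < j → j ≤ n →
      star (x k) * x k * star (x j) = q⁻¹ ^ 2 • (star (x j) * (star (x k) * x k)) := by
    intro k j hkj hjn
    have hkn : k ≤ n := le_trans (le_of_lt hkj) hjn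
    have e1 : x k * star (x j) = q⁻¹ • (star (x j) * x k) :=
      flip q _ _ hq (hstar j k hjn hkn (Ne.symm hkj.ne))
    have e3 := key k j hkn hjn hkj.ne
    have e2 := yy k j hkj hjn
    have step1 : q • (star (x k) * (x k * star (x j)))
        = d * (star (x k) * (x k * star (x j))) := by
      calc q • (star (x k) * (x k * star (x j)))
          = star (x k) * (q • (x k * star (x j))) := (mul_smul_comm _ _ _).symm
        _ = star (x k) * (d * (x k * star (x j))) := by rw [e3]
        _ = d * (star (x k) * (x k * star (x j))) := by rw [← mul_assoc, ← hdc, mul_assoc]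
    have step2 : q • (star (x k) * (x k * star (x j)))
        = star (x k) * (star (x j) * x k) := by
      calc q • (star (x k) * (x k * star (x j)))
          = star (x k) * (q • (x k * star (x j))) := (mul_smul_comm _ _ _).symm
        _ = star (x k) * ((q * q⁻¹) • (star (x j) * x k)) := by rw [e1, smul_smul]
        _ = star (x k) * (star (x j) * x k) := by rw [mul_inv_cancel₀ hq, one_smul]
    have main : q ^ 2 • (star (x k) * (x k * star (x j)))
        = star (x j) * (star (x k) * x k) := by
      calc q ^ 2 • (star (x k) * (x k * star (x j)))
          = q • (q • (star (x k) * (x k * star (x j)))) := by rw [sq, mul_smul]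
        _ = q • (d * (star (x k) * (x k * star (x j)))) := by rw [step1]
        _ = d * (q • (star (x k) * (x k * star (x j)))) := (mul_smul_comm _ _ _).symm
        _ = d * (star (x k) * (star (x j) * x k)) := by rw [step2]
        _ = (d * (star (x k) * star (x j))) * x k := by
            rw [mul_assoc, mul_assoc]
        _ = (star (x j) * star (x k)) * x k := by rw [← e2]
        _ = star (x j) * (star (x k) * x k) := mul_assoc _ _ _
    have := flip (q ^ 2) _ _ (pow_ne_zero 2 hq) main.symm
    rw [← inv_pow] at this
    rw [mul_assoc]
    exact this
  -- L' : x_k* x_k commutes with x_j* for j < k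
  have L' : ∀ j k, j < k → k ≤ n →
      star (x k) * x k * star (x j) = star (x j) * (star (x k) * x k) := by
    intro j k hjk hkn
    have hjn : j ≤ n := le_trans (le_of_lt hjk) hkn
    have e1 : x k * star (x j) = q⁻¹ • (star (x j) * x k) :=
      flip q _ _ hq (hstar j k hjn hkn hjk.ne)
    have e3 := key k j hkn hjn (Ne.symm hjk.ne)
    have e2 := yy j k hjk hkn
    have step1 : q • (star (x k) * (x k * star (x j)))
        = d * (star (x k) * (x k * star (x j))) := by
      calc q • (star (x k) * (x k * star (x j)))
          = star (x k) * (q • (x k * star (x j))) := (mul_smul_comm _ _ _).symm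
        _ = star (x k) * (d * (x k * star (x j))) := by rw [e3]
        _ = d * (star (x k) * (x k * star (x j))) := by rw [← mul_assoc, ← hdc, mul_assoc]
    have step2 : q • (star (x k) * (x k * star (x j)))
        = star (x k) * (star (x j) * x k) := by
      calc q • (star (x k) * (x k * star (x j)))
          = star (x k) * (q • (x k * star (x j))) := (mul_smul_comm _ _ _).symm
        _ = star (x k) * ((q * q⁻¹) • (star (x j) * x k)) := by rw [e1, smul_smul]
        _ = star (x k) * (star (x j) * x k) := by rw [mul_inv_cancel₀ hq, one_smul]
    have main : d * (star (x k) * (x k * star (x j)))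
        = d * (star (x j) * (star (x k) * x k)) := by
      calc d * (star (x k) * (x k * star (x j)))
          = q • (star (x k) * (x k * star (x j))) := step1.symm
        _ = star (x k) * (star (x j) * x k) := step2
        _ = (star (x k) * star (x j)) * x k := (mul_assoc _ _ _).symm
        _ = (d * (star (x j) * star (x k))) * x k := by rw [← e2]
        _ = d * (star (x j) * (star (x k) * x k)) := by rw [mul_assoc, mul_assoc]
    have hmain := congrArg (fun z => star (algebraMap ℝ A q⁻¹) * z) main
    simp only [← mul_assoc, hdinv, one_mul] at hmain
    rw [mul_assoc] at hmain ⊢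
    rw [mul_assoc] at hmain
    exact hmain
  -- Part 1 : s_i x_j = q² x_j s_i and s_i x_j* = q⁻² x_j* s_i for i < j ≤ n
  have P1 : ∀ i j, i < j → j ≤ n →
      partialRadius x i * x j = q ^ 2 • (x j * partialRadius x i) ∧
      partialRadius x i * star (x j) = q⁻¹ ^ 2 • (star (x j) * partialRadius x i) := by
    intro i
    induction i with
    | zero =>
      intro j hj hjn
      have hs0 : partialRadius x 0 = x 0 ^ 2 := rfl
      constructor
      · rw [hs0]
        simp only [sq]
        exact pair q q _ _ _ (hcomm 0 j hj hjn) (hcomm 0 j hj hjn)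
      · rw [hs0]
        have h' : x 0 * star (x j) = q⁻¹ • (star (x j) * x 0) :=
          flip q _ _ hq (hstar j 0 hjn (Nat.zero_le n) hj.ne')
        simp only [sq]
        exact pair q⁻¹ q⁻¹ _ _ _ h' h'
    | succ m ih =>
      intro j hj hjn
      have hmn : m + 1 ≤ n := le_trans (le_of_lt hj) hjn
      have hss : partialRadius x (m + 1)
          = partialRadius x m + star (x (m + 1)) * x (m + 1) := rfl
      have ihj := ih j (lt_trans (Nat.lt_succ_self m) hj) hjn
      constructor
      · have hT : star (x (m + 1)) * x (m + 1) * x j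
            = q ^ 2 • (x j * (star (x (m + 1)) * x (m + 1))) := by
          simp only [sq]
          exact pair q q _ _ _ (hstar (m + 1) j hmn hjn hj.ne) (hcomm (m + 1) j hj hjn)
        rw [hss, add_mul, ihj.1, hT, mul_add, smul_add]
      · have hT := L (m + 1) j hj hjn
        rw [hss, add_mul, ihj.2, hT, mul_add, smul_add]
  -- Part 2 : s_i commutes with x_j and x_j* for j ≤ i ≤ n
  have P2 : ∀ j, j ≤ n → ∀ i, j ≤ i → i ≤ n →
      partialRadius x i * x j = x j * partialRadius x i ∧
      partialRadius x i * star (x j) = star (x j) * partialRadius x i := by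
    intro j hjn i hji hin
    induction i, hji using Nat.le_induction with
    | base =>
      -- i = j : s_j commutes with x_j and x_j*
      match j, hjn with
      | 0, _ =>
        have hs0 : partialRadius x 0 = x 0 ^ 2 := rfl
        rw [hs0, hx0, sq, mul_assoc]
        exact ⟨rfl, rfl⟩
      | (m + 1), hjn =>
        have hmn : m < n := hjn
        have hP := P1 m (m + 1) (Nat.lt_succ_self m) hjn
        have hss : partialRadius x (m + 1)
            = partialRadius x m + star (x (m + 1)) * x (m + 1) := rfl
        set S := partialRadius x m with hS
        set X := x (m + 1) with hX
        set Y := star (x (m + 1)) with hY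
        have hXY : X * Y = Y * X + (1 - q⁻¹ ^ 2) • S :=
          sub_eq_iff_eq_add'.mp (hrel m hmn)
        have hSX : S * X = q ^ 2 • (X * S) := hP.1
        have hSY : S * Y = q⁻¹ ^ 2 • (Y * S) := hP.2
        constructor
        · -- (S + Y*X) * X = X * (S + Y*X)
          rw [hss, add_mul, mul_add]
          have hXYX : X * (Y * X) = Y * (X * X) + (1 - q⁻¹ ^ 2) • (S * X) := by
            rw [← mul_assoc, hXY, add_mul, smul_mul_assoc, mul_assoc]
          rw [mul_assoc, hXYX, hSX]
          have hq2 : q⁻¹ ^ 2 * q ^ 2 = 1 := by field_simp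
          have hXS : X * S = q⁻¹ ^ 2 • (q ^ 2 • (X * S)) := by
            rw [smul_smul, hq2, one_smul]
          rw [hXS]
          match_scalars <;> field_simp <;> ring
        · -- (S + Y*X) * Y = Y * (S + Y*X)
          rw [hss, add_mul, mul_add]
          have hYXY : Y * X * Y = Y * (Y * X) + (1 - q⁻¹ ^ 2) • (Y * S) := by
            rw [mul_assoc, hXY, mul_add, mul_smul_comm]
          rw [hYXY, hSY]
          match_scalars <;> field_simp <;> ring
    | succ m hm ihm =>
      have hmn : m ≤ n := le_trans (Nat.le_succ m) hin
      have ih := ihm hmn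
      have hss : partialRadius x (m + 1)
          = partialRadius x m + star (x (m + 1)) * x (m + 1) := rfl
      have hjm : j < m + 1 := Nat.lt_succ_of_le hm
      constructor
      · -- x part
        have hT : star (x (m + 1)) * x (m + 1) * x j
            = x j * (star (x (m + 1)) * x (m + 1)) := by
          have h1 : star (x (m + 1)) * x j = q • (x j * star (x (m + 1))) :=
            hstar (m + 1) j hin hjn hjm.ne'
          have h2 : x (m + 1) * x j = q⁻¹ • (x j * x (m + 1)) :=
            flip q _ _ hq (hcomm j (m + 1) hjm hin)
          have := pair q q⁻¹ _ _ _ h1 h2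
          rw [mul_inv_cancel₀ hq, one_smul] at this
          exact this
        rw [hss, add_mul, ih.1, hT, mul_add]
      · have hT := L' j (m + 1) hjm hin
        rw [hss, add_mul, ih.2, hT, mul_add]
  -- Part 3 : the partial radii pairwise commute
  have aux : ∀ j i, j ≤ i → i ≤ n →
      Commute (partialRadius x i) (partialRadius x j) := by
    intro j
    induction j with
    | zero =>
      intro i hji hin
      have h : Commute (partialRadius x i) (x 0) :=
        (P2 0 (Nat.zero_le n) i (Nat.zero_le i) hin).1
      show Commute (partialRadius x i) (x 0 ^ 2)
      exact h.pow_right 2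
    | succ m ihm =>
      intro i hji hin
      have hmi : m ≤ i := Nat.le_of_succ_le hji
      have h1 := ihm i hmi hin
      have hj1n : m + 1 ≤ n := le_trans hji hin
      have h2 := P2 (m + 1) hj1n i hji hin
      have h2a : Commute (partialRadius x i) (star (x (m + 1))) := h2.2
      have h2b : Commute (partialRadius x i) (x (m + 1)) := h2.1
      show Commute (partialRadius x i)
        (partialRadius x m + star (x (m + 1)) * x (m + 1))
      exact h1.add_right (h2a.mul_right h2b)
  refine ⟨P1, ?_, ?_, ?_⟩
  · intro i j hji hin
    exact P2 j (le_trans hji hin) i hji hin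
  · intro i j hin hjn
    rcases le_total j i with h | h
    · exact aux j i h hin
    · exact (aux i j h hjn).symm
  · intro j hjn
    have h := P2 j hjn n hjn le_rfl
    have h1 : Commute (partialRadius x n) (x j) := h.1
    have h2 : Commute (partialRadius x n) (star (x j)) := h.2
    exact ⟨h1, h2⟩
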